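/- Let X be compact Hausdorff, h : X → X a minimal homeomorphism, and Y ⊆ X closed with nonempty interior. For each value r in the range of the first return time function r_Y, set T_r = { y ∈ Y : h^r(y) ∈ Y }. Then r_Y has finite range, the sets T_r are compact, ⋃_r T_r = Y, h^r(T_r) ⊆ Y, and for each r the set { y ∈ Y : r_Y(y) = r } equals T_r \ ⋃_{r' < r, r' in range} T_{r'}. -/

import Mathlib

theorem aux_cont {X : Type*} [TopologicalSpace X] (h : X ≃ₜ X) (n : ℤ) :
    Continuous fun x => (h.toEquiv ^ n) x := by
  induction n using Int.induction_on with
  | zero => simpa using continuous_id'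
  | succ k ih =>
      have : (fun x => (h.toEquiv ^ ((k : ℤ) + 1)) x)
          = (fun x => (h.toEquiv ^ (k : ℤ)) x) ∘ ⇑h := by
        funext x
        simp [zpow_add, Equiv.Perm.mul_apply]
      rw [this]
      exact ih.comp h.continuous
  | pred k ih =>
      have : (fun x => (h.toEquiv ^ (-(k : ℤ) - 1)) x)
          = (fun x => (h.toEquiv ^ (-(k : ℤ))) x) ∘ ⇑h.symm := by
        funext x
        have : (-(k : ℤ) - 1) = (-(k:ℤ)) + (-1) := by ring
        rw [this, zpow_add, Equiv.Perm.mul_apply]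
        congr 1
      rw [this]
      exact ih.comp h.symm.continuous

theorem aux_bound {X : Type*} [TopologicalSpace X] [CompactSpace X]
    (h : X ≃ₜ X)
    (hmin : ∀ x : X, Dense (Set.range fun n : ℤ => (h.toEquiv ^ n) x))
    (Y : Set X) (hYint : (interior Y).Nonempty) :
    ∃ B : ℕ, ∀ x : X, ∃ k, 1 ≤ k ∧ k ≤ B ∧ (⇑h)^[k] x ∈ Y := by
  set V : ℤ → Set X := fun n => (fun x => (h.toEquiv ^ n) x) ⁻¹' interior Y with hV
  have hVopen : ∀ n, IsOpen (V n) := fun n => isOpen_interior.preimage (aux_cont h n)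
  have hcover : (Set.univ : Set X) ⊆ ⋃ n, V n := by
    intro x _
    obtain ⟨z, hz, hzU⟩ := (hmin x).exists_mem_open isOpen_interior hYint
    obtain ⟨n, rfl⟩ := hz
    exact Set.mem_iUnion.2 ⟨n, hzU⟩
  obtain ⟨t, ht⟩ := isCompact_univ.elim_finite_subcover V hVopen hcover
  set N : ℕ := t.sup fun n => (-n).toNat with hN
  set M : ℕ := t.sup fun n => n.toNat with hM
  refine ⟨M + N + 1, fun x => ?_⟩
  have hx : ((h.toEquiv ^ ((N : ℤ) + 1)) x) ∈ Set.univ := Set.mem_univ _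
  obtain ⟨n, hn, hmem⟩ := Set.mem_iUnion₂.1 (ht hx)
  have hnN : -(N : ℤ) ≤ n := by
    have : (-n).toNat ≤ N := Finset.le_sup (f := fun n : ℤ => (-n).toNat) hn
    omega
  have hnM : n ≤ (M : ℤ) := by
    have : n.toNat ≤ M := Finset.le_sup (f := fun n : ℤ => n.toNat) hn
    omega
  have hmem' : (h.toEquiv ^ (n + ((N : ℤ) + 1))) x ∈ interior Y := by
    rwa [zpow_add, Equiv.Perm.mul_apply]
  set k : ℕ := (n + ((N : ℤ) + 1)).toNat with hk
  have hk1 : 1 ≤ k := by omega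
  have hkB : k ≤ M + N + 1 := by omega
  refine ⟨k, hk1, hkB, ?_⟩
  have : (⇑h)^[k] x = (h.toEquiv ^ (n + ((N : ℤ) + 1))) x := by
    have hcast : ((k : ℤ)) = n + ((N : ℤ) + 1) := by omega
    rw [← hcast, zpow_natCast]
    simp [Equiv.Perm.coe_pow]
  rw [this]
  exact interior_subset hmem'

theorem stmt_13 {X : Type*} [TopologicalSpace X] [CompactSpace X] [T2Space X]
    (h : X ≃ₜ X)
    (hmin : ∀ x : X, Dense (Set.range fun n : ℤ => (h.toEquiv ^ n) x))
    (Y : Set X) (hYclosed : IsClosed Y) (hYint : (interior Y).Nonempty)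
    (rY : X → ℕ) (hrY : ∀ x, rY x = sInf {n : ℕ | 1 ≤ n ∧ (⇑h)^[n] x ∈ Y}) :
    (rY '' Y).Finite ∧
      (∀ ρ ∈ rY '' Y, IsCompact {y ∈ Y | (⇑h)^[ρ] y ∈ Y}) ∧
      (⋃ ρ ∈ rY '' Y, {y ∈ Y | (⇑h)^[ρ] y ∈ Y}) = Y ∧
      (∀ ρ ∈ rY '' Y, (⇑h)^[ρ] '' {y ∈ Y | (⇑h)^[ρ] y ∈ Y} ⊆ Y) ∧
      (∀ ρ ∈ rY '' Y, {y ∈ Y | rY y = ρ}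
        = {y ∈ Y | (⇑h)^[ρ] y ∈ Y} \
            ⋃ ρ' ∈ rY '' Y, ⋃ _ : ρ' < ρ, {y ∈ Y | (⇑h)^[ρ'] y ∈ Y}) := by
  obtain ⟨B, hB⟩ := aux_bound h hmin Y hYint
  -- membership of rY x in the set, and bound
  have hne : ∀ x, {n : ℕ | 1 ≤ n ∧ (⇑h)^[n] x ∈ Y}.Nonempty := by
    intro x
    obtain ⟨k, h1, _, h3⟩ := hB x
    exact ⟨k, h1, h3⟩
  have hmem : ∀ x, 1 ≤ rY x ∧ (⇑h)^[rY x] x ∈ Y := by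
    intro x
    rw [hrY]
    exact Nat.sInf_mem (hne x)
  have hle : ∀ x, rY x ≤ B := by
    intro x
    obtain ⟨k, h1, h2, h3⟩ := hB x
    rw [hrY]
    exact le_trans (Nat.sInf_le ⟨h1, h3⟩) h2
  have hmin' : ∀ x n, 1 ≤ n → (⇑h)^[n] x ∈ Y → rY x ≤ n := by
    intro x n h1 h2
    rw [hrY]
    exact Nat.sInf_le ⟨h1, h2⟩
  refine ⟨?_, ?_, ?_, ?_, ?_⟩
  · exact (Set.finite_Iic B).subset (by rintro _ ⟨y, _, rfl⟩; exact hle y)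
  · intro ρ _
    have : IsClosed {y ∈ Y | (⇑h)^[ρ] y ∈ Y} :=
      hYclosed.inter (hYclosed.preimage (h.continuous.iterate ρ))
    exact this.isCompact
  · apply Set.Subset.antisymm
    · intro y hy
      simp only [Set.mem_iUnion] at hy
      obtain ⟨_, _, hy, _⟩ := hy
      exact hy
    · intro y hy
      refine Set.mem_iUnion₂.2 ⟨rY y, ⟨y, hy, rfl⟩, hy, (hmem y).2⟩
  · rintro ρ _ _ ⟨y, ⟨_, hy2⟩, rfl⟩
    exact hy2
  · rintro ρ ⟨y₀, hy₀, rfl⟩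
    ext y
    simp only [Set.mem_setOf_eq, Set.mem_diff, Set.mem_iUnion, not_exists]
    constructor
    · rintro ⟨hyY, hρ⟩
      refine ⟨⟨hyY, hρ ▸ (hmem y).2⟩, ?_⟩
      rintro ρ' ⟨z, hz, rfl⟩ hlt ⟨_, hret⟩
      have := hmin' y (rY z) (hmem z).1 hret
      omega
    · rintro ⟨⟨hyY, hρ⟩, hnot⟩
      refine ⟨hyY, ?_⟩
      have h1 : rY y ≤ rY y₀ := hmin' y (rY y₀) (hmem y₀).1 hρ
      rcases eq_or_lt_of_le h1 with heq | hlt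
      · exact heq
      · exact absurd ⟨hyY, (hmem y).2⟩ (hnot (rY y) ⟨y, hyY, rfl⟩ hlt)
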